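/- arXiv:1401.1688 — 7 statements merged into one kernel-verified Lean document; each statement's English description precedes it below -/
import Mathlib

section
/- Let a > 0 and n ≥ 2, and let α₀ be the unique positive real root of 1 - x^n - a x. Then every complex root α of x^n - a x - 1 satisfies |α| ≥ α₀. -/
theorem roots_outside_small_disk (a : ℝ) (ha : 0 < a) (n : ℕ) (hn : 2 ≤ n)
    (α₀ : ℝ) (hα₀pos : 0 < α₀) (hα₀root : 1 - α₀ ^ n - a * α₀ = 0) :
    ∀ α : ℂ, α ^ n - (a : ℂ) * α - 1 = 0 → α₀ ≤ ‖α‖ := by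
  intro α hα
  by_contra h
  push_neg at h
  set r := ‖α‖ with hr
  have hr0 : 0 ≤ r := norm_nonneg α
  have heq : α ^ n - (a : ℂ) * α = 1 := by linear_combination hα
  have h1 : (1 : ℝ) ≤ r ^ n + a * r := by
    have := norm_sub_le (α ^ n) ((a : ℂ) * α)
    rw [heq] at this
    simpa [norm_pow, norm_mul, Complex.norm_real, Real.norm_eq_abs, abs_of_pos ha] using this
  have hpow : r ^ n < α₀ ^ n := pow_lt_pow_left₀ h hr0 (by omega)
  have hmul : a * r < a * α₀ := by exact mul_lt_mul_of_pos_left h ha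
  nlinarith
end

section
/- Let a ∈ (1,2] and suppose the polynomial a x - x^n - 1 has two distinct real roots γ₁ < γ₂ in (0,1]. Then for any γ with γ₁ < γ < γ₂, the trinomial x^n - a x - 1 has exactly one complex root (counted with multiplicity) in the open disk |x| < γ. -/
open scoped Classical

open Polynomial Finset
theorem one_root_in_disk (a : ℝ) (ha : a ∈ Set.Ioc (1 : ℝ) 2) (n : ℕ) (hn : 2 ≤ n)
    (γ₁ γ₂ : ℝ) (h12 : γ₁ < γ₂) (h1 : γ₁ ∈ Set.Ioc (0 : ℝ) 1) (h2 : γ₂ ∈ Set.Ioc (0 : ℝ) 1)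
    (hroot1 : a * γ₁ - γ₁ ^ n - 1 = 0) (hroot2 : a * γ₂ - γ₂ ^ n - 1 = 0)
    (γ : ℝ) (hγ : γ₁ < γ) (hγ' : γ < γ₂) :
    (((Polynomial.X ^ n - Polynomial.C (a : ℂ) * Polynomial.X - 1).roots.filter
      (fun z => ‖z‖ < γ)).card) = 1 := by
  obtain ⟨hγ1pos, hγ1le⟩ := h1
  obtain ⟨hγ2pos, hγ2le⟩ := h2
  obtain ⟨ha1, ha2⟩ := ha
  set p : ℂ[X] := X ^ n - C (a : ℂ) * X - 1 with hp
  have hγ1n : γ₁ ^ n = a * γ₁ - 1 := by linarith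
  have hγ2n : γ₂ ^ n = a * γ₂ - 1 := by linarith
  -- p is nonzero
  have hpmonic : p.Monic := by
    have h : p = X ^ n - (C (a:ℂ) * X + C 1) := by simp only [map_one]; ring
    rw [h]
    apply monic_X_pow_sub
    calc ((C (a:ℂ)) * X + C 1).degree ≤ 1 := degree_linear_le
      _ < (n : WithBot ℕ) := by exact_mod_cast Nat.one_lt_cast.mpr (by omega)
  have hpne : p ≠ 0 := hpmonic.ne_zero
  -- key bound : n * γ₁ ^ (n-1) < a
  have hkey : (n : ℝ) * γ₁ ^ (n - 1) < a := by
    have hgs : (∑ i ∈ range n, γ₂ ^ i * γ₁ ^ (n - 1 - i)) * (γ₂ - γ₁) = γ₂ ^ n - γ₁ ^ n :=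
      geom_sum₂_mul γ₂ γ₁ n
    have hsum : (∑ i ∈ range n, γ₂ ^ i * γ₁ ^ (n - 1 - i)) = a := by
      have h2 : a * (γ₂ - γ₁) = γ₂ ^ n - γ₁ ^ n := by rw [hγ1n, hγ2n]; ring
      have h3 := hgs.trans h2.symm
      have hne : γ₂ - γ₁ ≠ 0 := by linarith
      exact mul_right_cancel₀ hne h3
    rw [← hsum]
    have h4 : (n : ℝ) * γ₁ ^ (n - 1) = ∑ _i ∈ range n, γ₁ ^ (n - 1) := by
      rw [Finset.sum_const, card_range, nsmul_eq_mul]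
    rw [h4]
    apply Finset.sum_lt_sum
    · intro i hi
      rw [mem_range] at hi
      have h5 : γ₁ ^ (n-1) = γ₁ ^ i * γ₁ ^ (n - 1 - i) := by
        rw [← pow_add]; congr 1; omega
      rw [h5]
      exact mul_le_mul_of_nonneg_right (pow_le_pow_left₀ hγ1pos.le h12.le i) (by positivity)
    · refine ⟨1, mem_range.mpr (by omega), ?_⟩
      have h5 : γ₁ ^ (n-1) = γ₁ ^ 1 * γ₁ ^ (n - 1 - 1) := by
        rw [← pow_add]; congr 1; omega
      rw [h5]
      exact mul_lt_mul_of_pos_right (by simpa using h12) (by positivity)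
  -- any root satisfies z^n = a z + 1
  have hroot_eq : ∀ z : ℂ, z ∈ p.roots → z ^ n = (a : ℂ) * z + 1 := by
    intro z hz
    have h := (mem_roots hpne).mp hz
    simp only [hp, IsRoot, eval_sub, eval_pow, eval_X, eval_mul, eval_C, eval_one] at h
    linear_combination h
  -- any root in the disk has modulus ≤ γ₁
  have hmod : ∀ z : ℂ, z ∈ p.roots → ‖z‖ < γ → ‖z‖ ≤ γ₁ := by
    intro z hz hzγ
    by_contra hcon
    push_neg at hcon
    set r := ‖z‖ with hr
    have hzn := hroot_eq z hz
    have hrn : a * r - 1 ≤ r ^ n := by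
      have h6 : r ^ n = ‖(a:ℂ) * z + 1‖ := by rw [← hzn, norm_pow]
      rw [h6]
      have h7 := norm_add_le ((a:ℂ)*z + 1) (-1)
      have h7b : ‖(-1:ℂ)‖ = 1 := by simp
      rw [add_neg_cancel_right, h7b] at h7
      have h8 : ‖(a:ℂ)*z‖ = a * r := by
        rw [norm_mul, Complex.norm_real, Real.norm_eq_abs, abs_of_pos (by linarith : (0:ℝ) < a)]
      linarith
    -- strict convexity of x^n gives r^n < a * r - 1 for γ₁ < r < γ₂
    have hrγ2 : r < γ₂ := lt_trans hzγ hγ'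
    have hconv := strictConvexOn_pow (n := n) hn
    set t := (γ₂ - r) / (γ₂ - γ₁) with ht
    have hden : (0:ℝ) < γ₂ - γ₁ := by linarith
    have ht0 : 0 < t := by apply div_pos <;> linarith
    have ht1 : 0 < 1 - t := by
      have h9 : t < 1 := (div_lt_one hden).mpr (by linarith)
      linarith
    have hcomb : t * γ₁ + (1 - t) * γ₂ = r := by
      rw [ht, div_mul_eq_mul_div, one_sub_div hden.ne', div_mul_eq_mul_div, ← add_div,
        div_eq_iff hden.ne']; ring
    have h10 := hconv.2 (Set.mem_Ici.mpr hγ1pos.le) (Set.mem_Ici.mpr hγ2pos.le)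
      (by linarith : γ₁ ≠ γ₂) ht0 ht1 (by linarith : t + (1 - t) = 1)
    simp only [smul_eq_mul, hcomb] at h10
    rw [hγ1n, hγ2n] at h10
    have h11 : t * (a * γ₁ - 1) + (1 - t) * (a * γ₂ - 1) = a * r - 1 := by
      linear_combination a * hcomb
    linarith
  set S := p.roots.filter (fun z => ‖z‖ < γ) with hS
  have hmemS : ∀ z : ℂ, z ∈ S → z ∈ p.roots ∧ ‖z‖ ≤ γ₁ := by
    intro z hz
    rw [hS, Multiset.mem_filter] at hz
    exact ⟨hz.1, hmod z hz.1 hz.2⟩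
  -- existence: a real root in [-γ₁, 0]
  have hex : 1 ≤ Multiset.card S := by
    have hcont : ContinuousOn (fun x : ℝ => x ^ n - a * x - 1) (Set.Icc (-γ₁) 0) := by
      fun_prop
    have hfneg : (0:ℝ) ≤ (-γ₁) ^ n - a * (-γ₁) - 1 := by
      have h2 := neg_abs_le ((-γ₁) ^ n)
      rw [abs_pow, abs_neg, abs_of_pos hγ1pos] at h2
      nlinarith
    have hiv := intermediate_value_Icc' (by linarith : -γ₁ ≤ (0:ℝ)) hcont
    have h0mem : (0:ℝ) ∈ Set.Icc ((fun x : ℝ => x ^ n - a * x - 1) 0)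
        ((fun x : ℝ => x ^ n - a * x - 1) (-γ₁)) := by
      simp only [Set.mem_Icc]
      constructor
      · rw [zero_pow (by omega : n ≠ 0)]; norm_num
      · simpa using hfneg
    obtain ⟨x₀, hx₀mem, hx₀⟩ := hiv h0mem
    simp only at hx₀
    have hx₀S : (x₀ : ℂ) ∈ S := by
      rw [hS, Multiset.mem_filter]
      refine ⟨?_, ?_⟩
      · rw [mem_roots hpne]
        simp only [hp, IsRoot, eval_sub, eval_pow, eval_X, eval_mul, eval_C, eval_one]
        have h11 : ((x₀:ℂ)) ^ n - (a:ℂ) * (x₀:ℂ) - 1 = ((x₀ ^ n - a * x₀ - 1 : ℝ) : ℂ) := by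
          push_cast; ring
        rw [h11, hx₀]; simp
      · simp only [Complex.norm_real, Real.norm_eq_abs]
        obtain ⟨hl, hr⟩ := hx₀mem
        have hb : |x₀| ≤ γ₁ := abs_le.mpr ⟨by linarith, by linarith⟩
        linarith
    exact Nat.one_le_iff_ne_zero.mpr (by
      intro hc
      rw [Multiset.card_eq_zero] at hc
      rw [hc] at hx₀S
      exact absurd hx₀S (Multiset.notMem_zero _))
  -- uniqueness: card ≤ 1
  have huniq : Multiset.card S ≤ 1 := by
    by_contra hc
    push_neg at hc
    obtain ⟨z, hz⟩ := Multiset.card_pos_iff_exists_mem.mp (show 0 < Multiset.card S by omega)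
    obtain ⟨T, hT⟩ := Multiset.exists_cons_of_mem hz
    have hTcard : 1 ≤ Multiset.card T := by
      have h := hc
      rw [hT, Multiset.card_cons] at h
      omega
    obtain ⟨w, hw⟩ := Multiset.card_pos_iff_exists_mem.mp (show 0 < Multiset.card T by omega)
    have hwS : w ∈ S := by rw [hT]; exact Multiset.mem_cons_of_mem hw
    obtain ⟨hzr, hzb⟩ := hmemS z hz
    obtain ⟨hwr, hwb⟩ := hmemS w hwS
    have habs : (a : ℝ) ≤ (n : ℝ) * γ₁ ^ (n - 1) := by
      by_cases hzw : z = w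
      · -- double root : z is a root of the derivative
        have hcount : 2 ≤ p.roots.count z := by
          have hle : S ≤ p.roots := Multiset.filter_le _ _
          have h2 : 2 ≤ S.count z := by
            rw [hT, Multiset.count_cons_self]
            have h3 : 1 ≤ T.count z := Multiset.one_le_count_iff_mem.mpr (hzw ▸ hw)
            omega
          exact le_trans h2 (Multiset.count_le_of_le z hle)
        rw [count_roots] at hcount
        have hd : (derivative^[1] p).IsRoot z :=
          isRoot_iterate_derivative_of_lt_rootMultiplicity (by omega)
        simp only [Function.iterate_one] at hd
        have hdp : derivative p = C (n : ℂ) * X ^ (n-1) - C (a:ℂ) := by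
          simp only [hp, derivative_sub, derivative_one, derivative_mul, derivative_C,
            derivative_X, derivative_X_pow, sub_zero, mul_one, zero_mul, add_zero, zero_add]
        rw [IsRoot, hdp] at hd
        simp only [eval_sub, eval_mul, eval_pow, eval_X, eval_C] at hd
        have h13 : (a : ℂ) = (n : ℂ) * z ^ (n-1) := by linear_combination -hd
        have h14 : a = ‖(n:ℂ) * z ^ (n-1)‖ := by
          rw [← h13, Complex.norm_real, Real.norm_eq_abs, abs_of_pos (by linarith)]
        rw [h14, norm_mul, norm_pow, Complex.norm_natCast]
        exact mul_le_mul_of_nonneg_left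
          (pow_le_pow_left₀ (norm_nonneg z) hzb _) (Nat.cast_nonneg n)
      · -- two distinct roots
        have hzn := hroot_eq z hzr
        have hwn := hroot_eq w hwr
        have hsub : z ^ n - w ^ n = (a:ℂ) * (z - w) := by
          rw [hzn, hwn]; ring
        have hgs : (∑ i ∈ range n, z ^ i * w ^ (n - 1 - i)) * (z - w) = z ^ n - w ^ n :=
          geom_sum₂_mul z w n
        have hne : z - w ≠ 0 := sub_ne_zero.mpr hzw
        have haeq : (a:ℂ) = ∑ i ∈ range n, z ^ i * w ^ (n - 1 - i) := by
          have h12' := hgs.trans hsub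
          exact (mul_right_cancel₀ hne h12').symm
        have h16 : (a:ℝ) = ‖∑ i ∈ range n, z ^ i * w ^ (n - 1 - i)‖ := by
          rw [← haeq, Complex.norm_real, Real.norm_eq_abs, abs_of_pos (by linarith)]
        rw [h16]
        calc ‖∑ i ∈ range n, z ^ i * w ^ (n - 1 - i)‖
            ≤ ∑ i ∈ range n, ‖z ^ i * w ^ (n - 1 - i)‖ :=
              norm_sum_le _ _
          _ ≤ ∑ _i ∈ range n, γ₁ ^ (n-1) := by
              apply Finset.sum_le_sum
              intro i hi
              rw [mem_range] at hi
              rw [norm_mul, norm_pow, norm_pow]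
              have h17 : γ₁ ^ (n-1) = γ₁ ^ i * γ₁ ^ (n - 1 - i) := by
                rw [← pow_add]; congr 1; omega
              rw [h17]
              exact mul_le_mul (pow_le_pow_left₀ (norm_nonneg z) hzb i)
                (pow_le_pow_left₀ (norm_nonneg w) hwb _)
                (by positivity) (by positivity)
          _ = (n:ℝ) * γ₁ ^ (n-1) := by
              rw [Finset.sum_const, card_range, nsmul_eq_mul]
    linarith
  omega
end

section
/- Let a ∈ (1,2] be real. Then for all sufficiently large n, the polynomial P₂(x) = a x - x^n - 1 has exactly two real roots in the interval (0,1]. -/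
open Set

lemma mid_neg {f : ℝ → ℝ} {s : Set ℝ} (hf : StrictConvexOn ℝ s f) {p q r : ℝ}
    (hp : p ∈ s) (hr : r ∈ s) (h1 : p < q) (h2 : q < r) (fp : f p ≤ 0) (fr : f r ≤ 0) :
    f q < 0 := by
  have hrp : (0 : ℝ) < r - p := by linarith
  set t : ℝ := (r - q) / (r - p) with ht
  have ht0 : 0 < t := div_pos (by linarith) hrp
  have ht1 : t < 1 := (div_lt_one hrp).2 (by linarith)
  have key := hf.2 hp hr (ne_of_lt (by linarith)) ht0 (by linarith : (0:ℝ) < 1 - t) (by ring)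
  have hq : t • p + (1 - t) • r = q := by
    simp only [smul_eq_mul, ht]
    field_simp
    ring
  rw [hq] at key
  simp only [smul_eq_mul] at key
  nlinarith [mul_nonpos_of_nonneg_of_nonpos ht0.le fp,
    mul_nonpos_of_nonneg_of_nonpos (by linarith : (0:ℝ) ≤ 1 - t) fr]

lemma three_zeros {f : ℝ → ℝ} {s : Set ℝ} (hf : StrictConvexOn ℝ s f) {p q r : ℝ}
    (hp : p ∈ s) (hq : q ∈ s) (hr : r ∈ s) (hpq : p ≠ q) (hqr : q ≠ r) (hpr : p ≠ r)
    (fp : f p = 0) (fq : f q = 0) (fr : f r = 0) : False := by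
  rcases lt_trichotomy p q with h1 | h1 | h1
  · rcases lt_trichotomy q r with h2 | h2 | h2
    · exact absurd (mid_neg hf hp hr h1 h2 fp.le fr.le) (by rw [fq]; exact lt_irrefl 0)
    · exact hqr h2
    · rcases lt_trichotomy p r with h3 | h3 | h3
      · exact absurd (mid_neg hf hp hq h3 h2 fp.le fq.le) (by rw [fr]; exact lt_irrefl 0)
      · exact hpr h3
      · exact absurd (mid_neg hf hr hq h3 h1 fr.le fq.le) (by rw [fp]; exact lt_irrefl 0)
  · exact hpq h1
  · rcases lt_trichotomy p r with h2 | h2 | h2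
    · exact absurd (mid_neg hf hq hr h1 h2 fq.le fr.le) (by rw [fp]; exact lt_irrefl 0)
    · exact hpr h2
    · rcases lt_trichotomy q r with h3 | h3 | h3
      · exact absurd (mid_neg hf hq hp h3 h2 fq.le fp.le) (by rw [fr]; exact lt_irrefl 0)
      · exact hqr h3
      · exact absurd (mid_neg hf hr hp h3 h1 fr.le fp.le) (by rw [fq]; exact lt_irrefl 0)

theorem two_real_roots_eventually (a : ℝ) (ha : a ∈ Set.Ioc (1 : ℝ) 2) :
    ∃ n₀ : ℕ, ∀ n : ℕ, n₀ < n →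
      ∃ γ₁ γ₂ : ℝ, γ₁ ≠ γ₂ ∧
        {x : ℝ | x ∈ Set.Ioc (0 : ℝ) 1 ∧ a * x - x ^ n - 1 = 0} = {γ₁, γ₂} := by
  obtain ⟨ha1, ha2⟩ := ha
  have ha0 : (0:ℝ) < a := by linarith
  set x₀ : ℝ := (1 + 1 / a) / 2 with hx₀
  have hia : 1 / a < 1 := by rw [div_lt_one ha0]; linarith
  have hia0 : 0 < 1 / a := by positivity
  have hx₀0 : 0 < x₀ := by rw [hx₀]; linarith
  have hx₀1 : x₀ < 1 := by rw [hx₀]; linarith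
  have hax₀ : a * x₀ - 1 = (a - 1) / 2 := by
    rw [hx₀]; field_simp; ring
  obtain ⟨N, hN⟩ := exists_pow_lt_of_lt_one (by linarith : (0:ℝ) < (a - 1) / 2) hx₀1
  refine ⟨max 2 N, fun n hn => ?_⟩
  have hn2 : 2 ≤ n := le_of_lt (lt_of_le_of_lt (le_max_left 2 N) hn)
  have hnN : N ≤ n := le_of_lt (lt_of_le_of_lt (le_max_right 2 N) hn)
  set f : ℝ → ℝ := fun x => a * x - x ^ n - 1 with hf
  have hfx₀ : 0 < f x₀ := by
    have h1 : x₀ ^ n ≤ x₀ ^ N := pow_le_pow_of_le_one hx₀0.le hx₀1.le hnN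
    show 0 < a * x₀ - x₀ ^ n - 1
    nlinarith
  have hcont : Continuous f := by fun_prop
  have hf0 : f 0 = -1 := by
    show a * 0 - 0 ^ n - 1 = -1
    rw [zero_pow (by omega : n ≠ 0)]; ring
  have hf1 : f 1 = a - 2 := by show a * 1 - 1 ^ n - 1 = a - 2; rw [one_pow]; ring
  -- first root in (0, x₀)
  obtain ⟨γ₁, hγ₁mem, hγ₁⟩ : ∃ c ∈ Icc (0:ℝ) x₀, f c = 0 := by
    have hmem : (0:ℝ) ∈ Icc (f 0) (f x₀) := ⟨by rw [hf0]; norm_num, hfx₀.le⟩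
    obtain ⟨c, hc, hc0⟩ := intermediate_value_Icc hx₀0.le hcont.continuousOn hmem
    exact ⟨c, hc, hc0⟩
  -- second root in (x₀, 1]
  obtain ⟨γ₂, hγ₂mem, hγ₂⟩ : ∃ c ∈ Icc x₀ (1:ℝ), f c = 0 := by
    have hmem : (0:ℝ) ∈ Icc (f 1) (f x₀) := ⟨by rw [hf1]; linarith, hfx₀.le⟩
    obtain ⟨c, hc, hc0⟩ := intermediate_value_Icc' hx₀1.le hcont.continuousOn hmem
    exact ⟨c, hc, hc0⟩
  have hγ₁0 : 0 < γ₁ := by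
    rcases hγ₁mem.1.lt_or_eq with h | h
    · exact h
    · exfalso; rw [← h, hf0] at hγ₁; norm_num at hγ₁
  have hγ₁lt : γ₁ < x₀ := by
    rcases hγ₁mem.2.lt_or_eq with h | h
    · exact h
    · exfalso; rw [h] at hγ₁; linarith
  have hγ₂gt : x₀ < γ₂ := by
    rcases hγ₂mem.1.lt_or_eq with h | h
    · exact h
    · exfalso; rw [← h] at hγ₂; linarith
  have hne : γ₁ ≠ γ₂ := ne_of_lt (lt_trans hγ₁lt hγ₂gt)
  -- strict convexity of -f on [0,1]
  have hconv : StrictConvexOn ℝ (Icc (0:ℝ) 1) (fun x => - f x) := by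
    have h1 : StrictConvexOn ℝ (Icc (0:ℝ) 1) (fun x : ℝ => x ^ n) :=
      (strictConvexOn_pow hn2).subset (Icc_subset_Ici_self) (convex_Icc 0 1)
    have h2 : ConvexOn ℝ (Icc (0:ℝ) 1) (fun x : ℝ => 1 - a * x) := by
      refine ⟨convex_Icc 0 1, fun x _ y _ p q hp hq hpq => ?_⟩
      simp only [smul_eq_mul]
      nlinarith
    have := h1.add_convexOn h2
    convert this using 2 with x
    show -(a * x - x ^ n - 1) = x ^ n + (1 - a * x); ring
    rfl
  refine ⟨γ₁, γ₂, hne, ?_⟩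
  ext x
  simp only [mem_setOf_eq, mem_insert_iff, mem_singleton_iff]
  constructor
  · rintro ⟨hx, hfx⟩
    by_contra hcon
    push_neg at hcon
    obtain ⟨hx1, hx2⟩ := hcon
    exact three_zeros hconv
      (⟨hx.1.le, hx.2⟩ : x ∈ Icc (0:ℝ) 1)
      (⟨hγ₁0.le, hγ₁lt.le.trans hx₀1.le⟩ : γ₁ ∈ Icc (0:ℝ) 1)
      (⟨(hx₀0.trans hγ₂gt).le, hγ₂mem.2⟩ : γ₂ ∈ Icc (0:ℝ) 1)
      hx1 hne hx2
      (by simp only [neg_eq_zero]; exact hfx) (by simp only [neg_eq_zero]; exact hγ₁)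
      (by simp only [neg_eq_zero]; exact hγ₂)
  · rintro (rfl | rfl)
    · exact ⟨⟨hγ₁0, hγ₁lt.le.trans hx₀1.le⟩, hγ₁⟩
    · exact ⟨⟨hx₀0.trans hγ₂gt, hγ₂mem.2⟩, hγ₂⟩
end

section
/- Fix a ∈ (0,1]. For every ε > 0 there exists n₀ such that for all n > n₀, every complex root α of x^n - a x - 1 satisfies 1 - ε < |α| < 1 + ε. -/
theorem root_moduli_close_to_one (a : ℝ) (ha : a ∈ Set.Ioc (0 : ℝ) 1) :
    ∀ ε > (0 : ℝ), ∃ n₀ : ℕ, ∀ n : ℕ, n₀ < n →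
      ∀ α : ℂ, α ^ n - (a : ℂ) * α - 1 = 0 →
        1 - ε < ‖α‖ ∧ ‖α‖ < 1 + ε := by
  obtain ⟨ha0, ha1⟩ := ha
  intro ε hε
  set ε' : ℝ := min ε 1 with hε'def
  have hε'0 : 0 < ε' := lt_min hε one_pos
  have hε'1 : ε' ≤ 1 := min_le_right _ _
  have hε'ε : ε' ≤ ε := min_le_left _ _
  -- (1-ε')^n → 0
  have h1 : Filter.Tendsto (fun n : ℕ => (1 - ε') ^ n) Filter.atTop (nhds 0) :=
    tendsto_pow_atTop_nhds_zero_of_lt_one (by linarith) (by linarith)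
  have h1' : ∀ᶠ n in Filter.atTop, (1 - ε') ^ n < ε' :=
    h1.eventually (gt_mem_nhds hε'0)
  obtain ⟨N₁, hN₁⟩ := Filter.eventually_atTop.mp h1'
  -- (1+ε')^n → ∞
  have h2 : Filter.Tendsto (fun n : ℕ => (1 + ε') ^ n) Filter.atTop Filter.atTop :=
    tendsto_pow_atTop_atTop_of_one_lt (by linarith)
  have h2' : ∀ᶠ n in Filter.atTop, 2 < (1 + ε') ^ n := h2.eventually_gt_atTop 2
  obtain ⟨N₂, hN₂⟩ := Filter.eventually_atTop.mp h2'
  refine ⟨max N₁ (N₂ + 1), fun n hn α hα => ?_⟩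
  have hnN₁ : N₁ ≤ n := le_trans (le_max_left _ _) hn.le
  have hnN₂ : N₂ ≤ n - 1 := by omega
  have hn1 : 1 ≤ n := by omega
  set r : ℝ := ‖α‖ with hr
  have hr0 : 0 ≤ r := norm_nonneg α
  have heq : α ^ n = (a : ℂ) * α + 1 := by linear_combination hα
  have habs : r ^ n = ‖(a : ℝ) * α + 1‖ := by
    rw [hr, ← norm_pow, heq]
  have habsa : ‖(a : ℂ)‖ = a := by
    simp [abs_of_pos ha0]
  have hub : r ^ n ≤ a * r + 1 := by
    rw [habs]
    calc ‖(a : ℝ) * α + 1‖ ≤ ‖(a : ℝ) * α‖ + ‖(1 : ℂ)‖ :=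
          norm_add_le _ _
      _ = a * r + 1 := by rw [norm_mul, habsa, norm_one]
  have hlb : 1 - a * r ≤ r ^ n := by
    rw [habs]
    calc 1 - a * r = ‖(1 : ℂ)‖ - ‖(a : ℝ) * α‖ := by
          rw [norm_one, norm_mul, habsa]
      _ ≤ ‖(a : ℝ) * α + 1‖ := by
          have h := norm_add_le ((a : ℝ) * α + 1) (-((a : ℝ) * α))
          have he : (a : ℂ) * α + 1 + -((a : ℝ) * α) = 1 := by ring
          rw [he, norm_neg] at h
          linarith
  constructor
  · -- lower bound
    by_contra h
    push_neg at h
    have hrle : r ≤ 1 - ε' := by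
      by_contra h'
      push_neg at h'
      linarith
    have h3 : r ^ n ≤ (1 - ε') ^ n := pow_le_pow_left₀ hr0 hrle n
    have h4 : a * r ≤ 1 - ε' := le_trans (by nlinarith) hrle
    have h5 : ε' ≤ r ^ n := by linarith
    have := hN₁ n hnN₁
    linarith
  · -- upper bound
    by_contra h
    push_neg at h
    have hrge : 1 + ε' ≤ r := le_trans (by linarith) h
    have hr1 : 1 ≤ r := by linarith
    have h3 : r ^ n ≤ 2 * r := by nlinarith
    have h4 : r ^ (n - 1) * r = r ^ n := by
      rw [← pow_succ]
      congr 1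
      omega
    have h5 : r ^ (n - 1) ≤ 2 := by
      have hrpos : 0 < r := by linarith
      nlinarith
    have h6 : (1 + ε') ^ (n - 1) ≤ r ^ (n - 1) := pow_le_pow_left₀ (by linarith) hrge _
    have := hN₂ (n - 1) hnN₂
    linarith
end

section
/- Fix a ∈ (1,2]. For every ε > 0 there exists n₀ such that for all n > n₀, every complex root α of x^n - a x - 1 satisfies either |α + 1/a| < ε or 1 - ε < |α| < 1 + ε. -/
theorem root_moduli_dichotomy (a : ℝ) (ha : a ∈ Set.Ioc (1 : ℝ) 2) :
    ∀ ε > (0 : ℝ), ∃ n₀ : ℕ, ∀ n : ℕ, n₀ < n →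
      ∀ α : ℂ, α ^ n - (a : ℂ) * α - 1 = 0 →
        ‖α + 1 / (a : ℂ)‖ < ε ∨
          (1 - ε < ‖α‖ ∧ ‖α‖ < 1 + ε) := by
  obtain ⟨ha1, ha2⟩ := ha
  intro ε hε
  set ε₁ := min ε (1/2) with hε₁def
  have hε₁pos : 0 < ε₁ := lt_min hε (by norm_num)
  have hε₁le : ε₁ ≤ ε := min_le_left _ _
  have hε₁half : ε₁ ≤ 1/2 := min_le_right _ _
  obtain ⟨m₁, hm₁⟩ : ∃ m, (3:ℝ) < (1+ε₁)^m := pow_unbounded_of_one_lt 3 (by linarith)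
  obtain ⟨m₂, hm₂⟩ : ∃ m, (1-ε₁)^m < ε₁ := exists_pow_lt_of_lt_one hε₁pos (by linarith)
  refine ⟨max m₁ m₂, fun n hn α hα => ?_⟩
  have hroot : α ^ n = (a:ℂ) * α + 1 := by linear_combination hα
  set r := ‖α‖ with hr
  have hr0 : 0 ≤ r := norm_nonneg α
  have habs : r ^ n = ‖(a:ℂ) * α + 1‖ := by
    rw [hr, ← norm_pow, hroot]
  have hn1 : m₁ < n := lt_of_le_of_lt (le_max_left _ _) hn
  have hn2 : m₂ < n := lt_of_le_of_lt (le_max_right _ _) hn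
  have haabs : ‖(a:ℂ)‖ = a := by
    rw [Complex.norm_real, Real.norm_eq_abs]; exact abs_of_pos (by linarith)
  by_cases hcase : r ≤ 1 - ε₁
  · left
    have ha0 : (a:ℂ) ≠ 0 := by
      exact_mod_cast ne_of_gt (by linarith : (0:ℝ) < a)
    have heq : α + 1 / (a:ℂ) = ((a:ℂ) * α + 1) / a := by field_simp
    have h1 : ‖(a:ℂ)*α+1‖ ≤ (1-ε₁)^n := by
      rw [← habs]; exact pow_le_pow_left₀ hr0 hcase n
    have h2 : (1-ε₁)^n ≤ (1-ε₁)^m₂ :=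
      pow_le_pow_of_le_one (by linarith) (by linarith) (le_of_lt hn2)
    rw [heq, norm_div, haabs]
    have h3 : ‖(a:ℂ)*α+1‖ / a ≤ ‖(a:ℂ)*α+1‖ :=
      div_le_self (norm_nonneg _) (by linarith)
    linarith
  · right
    push_neg at hcase
    constructor
    · linarith
    · by_contra hbig
      push_neg at hbig
      have hrge : 1 + ε₁ ≤ r := by linarith
      have hr1 : (1:ℝ) ≤ r := by linarith
      have htri : ‖(a:ℂ)*α+1‖ ≤ a * r + 1 := by
        calc ‖(a:ℂ)*α+1‖ ≤ ‖(a:ℂ)*α‖ + ‖(1:ℂ)‖ :=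
              norm_add_le _ _
          _ = a * r + 1 := by rw [norm_mul, haabs, norm_one]
      have h3r : r ^ n ≤ 3 * r := by
        rw [habs]; nlinarith
      have hnpos : 1 ≤ n := by omega
      have hm1le : m₁ ≤ n - 1 := by omega
      have hpow : (1+ε₁)^(n-1) ≤ r^(n-1) := pow_le_pow_left₀ (by linarith) hrge _
      have hpow2 : (1+ε₁)^m₁ ≤ (1+ε₁)^(n-1) := pow_le_pow_right₀ (by linarith) hm1le
      have hsplit : r ^ n = r ^ (n-1) * r := by
        rw [← pow_succ]; congr 1; omega
      nlinarith [pow_nonneg hr0 (n-1)]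
end

section
/- Let a ∈ (0,2) and n sufficiently large. If α₁ = ρ₁ e^{iφ₁} and α₂ = ρ₂ e^{iφ₂} are roots of x^n - a x - 1 with 0 ≤ φ₁ < φ₂ < π, then ρ₁ > ρ₂; i.e., the modulus of a root is a strictly decreasing function of its argument on [0, π). -/
open Complex Filter Finset

private lemma pow_sub_pow_ge_aux {x y : ℝ} (hy : 0 ≤ y) (hxy : y ≤ x) (k : ℕ) :
    ((k : ℝ) + 1) * y ^ k * (x - y) ≤ x ^ (k + 1) - y ^ (k + 1) := by
  have hgs := geom_sum₂_mul x y (k + 1)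
  have hterm : ∀ i ∈ Finset.range (k + 1), y ^ k ≤ x ^ i * y ^ (k + 1 - 1 - i) := by
    intro i hi
    rw [Finset.mem_range] at hi
    have he : y ^ k = y ^ i * y ^ (k + 1 - 1 - i) := by
      rw [← pow_add]; congr 1; omega
    rw [he]
    exact mul_le_mul_of_nonneg_right (pow_le_pow_left₀ hy hxy i) (pow_nonneg hy _)
  have hsum : ((k : ℝ) + 1) * y ^ k ≤ ∑ i ∈ Finset.range (k + 1), x ^ i * y ^ (k + 1 - 1 - i) := by
    calc ((k : ℝ) + 1) * y ^ k = ∑ _i ∈ Finset.range (k + 1), y ^ k := by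
          rw [Finset.sum_const, Finset.card_range, nsmul_eq_mul]; push_cast; ring
      _ ≤ _ := Finset.sum_le_sum hterm
  calc ((k : ℝ) + 1) * y ^ k * (x - y)
      ≤ (∑ i ∈ Finset.range (k + 1), x ^ i * y ^ (k + 1 - 1 - i)) * (x - y) :=
        mul_le_mul_of_nonneg_right hsum (by linarith)
    _ = x ^ (k + 1) - y ^ (k + 1) := hgs

private lemma root_modulus_eq {a ρ φ : ℝ} {n : ℕ} (hρ : 0 < ρ)
    (h : ((ρ : ℂ) * Complex.exp (φ * Complex.I)) ^ n
        - (a : ℂ) * ((ρ : ℂ) * Complex.exp (φ * Complex.I)) - 1 = 0) :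
    (ρ ^ n) ^ 2 = a ^ 2 * ρ ^ 2 + 2 * a * ρ * Real.cos φ + 1 := by
  set z : ℂ := (ρ : ℂ) * Complex.exp (φ * Complex.I) with hzdef
  have hz : z ^ n = a * z + 1 := by linear_combination h
  have hre : z.re = ρ * Real.cos φ := by
    simp [hzdef, Complex.mul_re, Complex.exp_ofReal_mul_I_re, Complex.exp_ofReal_mul_I_im]
  have him : z.im = ρ * Real.sin φ := by
    simp [hzdef, Complex.mul_im, Complex.exp_ofReal_mul_I_re, Complex.exp_ofReal_mul_I_im]
  have hsq : Complex.normSq z = ρ ^ 2 := by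
    rw [Complex.normSq_apply, hre, him]
    nlinarith [Real.sin_sq_add_cos_sq φ]
  have h2 := congrArg Complex.normSq hz
  rw [map_pow, hsq] at h2
  have hR : Complex.normSq ((a : ℂ) * z + 1) =
      (a * (ρ * Real.cos φ) + 1) ^ 2 + (a * (ρ * Real.sin φ)) ^ 2 := by
    rw [Complex.normSq_apply]
    simp [Complex.add_re, Complex.add_im, Complex.mul_re, Complex.mul_im, hre, him]
    ring
  rw [hR] at h2
  have h3 : (ρ ^ n) ^ 2 = (ρ ^ 2) ^ n := by rw [← pow_mul, ← pow_mul, mul_comm]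
  rw [h3, h2]
  nlinarith [Real.sin_sq_add_cos_sq φ, sq_nonneg (a * ρ)]

private lemma not_two_small_roots {a : ℝ} {n : ℕ} (ha0 : 0 < a) {z w : ℂ} (hzw : z ≠ w)
    (hz : z ^ n = a * z + 1) (hw : w ^ n = a * w + 1) {r : ℝ} (hr0 : 0 ≤ r)
    (hzr : ‖z‖ ≤ r) (hwr : ‖w‖ ≤ r)
    (hnr : (n : ℝ) * r ^ (n - 1) < a) : False := by
  have hsum : (∑ i ∈ Finset.range n, z ^ i * w ^ (n - 1 - i)) = (a : ℂ) := by
    have h1 : (∑ i ∈ Finset.range n, z ^ i * w ^ (n - 1 - i)) * (z - w) = (a : ℂ) * (z - w) := by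
      rw [geom_sum₂_mul, hz, hw]; ring
    exact mul_right_cancel₀ (sub_ne_zero.mpr hzw) h1
  have habs : a ≤ (n : ℝ) * r ^ (n - 1) := by
    calc a = ‖(a : ℂ)‖ := by rw [Complex.norm_real, Real.norm_eq_abs, abs_of_pos ha0]
      _ = ‖∑ i ∈ Finset.range n, z ^ i * w ^ (n - 1 - i)‖ := by rw [hsum]
      _ ≤ ∑ i ∈ Finset.range n, ‖z ^ i * w ^ (n - 1 - i)‖ := by
          exact norm_sum_le _ _
      _ ≤ ∑ _i ∈ Finset.range n, r ^ (n - 1) := by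
          apply Finset.sum_le_sum
          intro i hi
          rw [Finset.mem_range] at hi
          rw [norm_mul, norm_pow, norm_pow]
          have he : r ^ (n - 1) = r ^ i * r ^ (n - 1 - i) := by
            rw [← pow_add]; congr 1; omega
          rw [he]
          exact mul_le_mul (pow_le_pow_left₀ (norm_nonneg z) hzr i)
            (pow_le_pow_left₀ (norm_nonneg w) hwr _)
            (pow_nonneg (norm_nonneg w) _) (pow_nonneg hr0 _)
      _ = (n : ℝ) * r ^ (n - 1) := by rw [Finset.sum_const, Finset.card_range, nsmul_eq_mul]
  linarith

private lemma root_pow_upper {a ρ B c : ℝ} (hρ : 0 < ρ) (hB : 0 < B) (hc : c ≤ 1)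
    (hE : (ρ * B) ^ 2 = a ^ 2 * ρ ^ 2 + 2 * a * ρ * c + 1) (ha0 : 0 < a) :
    ρ * B ≤ a * ρ + 1 := by
  nlinarith [mul_pos hρ hB, mul_pos ha0 hρ]

private lemma root_pow_lower {a ρ B c : ℝ} (hρ : 0 < ρ) (hB : 0 < B) (hc : -1 ≤ c)
    (hE : (ρ * B) ^ 2 = a ^ 2 * ρ ^ 2 + 2 * a * ρ * c + 1) (ha0 : 0 < a) :
    a * ρ - 1 ≤ ρ * B := by
  nlinarith [mul_pos hρ hB, mul_pos ha0 hρ]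

private lemma rho_le_three {a ρ B : ℝ} {m : ℕ} (hρ : 0 < ρ) (hB : 0 < B)
    (hBdef : B = ρ ^ (m + 1)) (ha2 : a < 2) (hle : ρ * B ≤ a * ρ + 1) : ρ ≤ 3 := by
  by_contra hgt
  push_neg at hgt
  have hA : ρ * B = ρ ^ (m + 2) := by rw [hBdef, ← pow_succ']
  have hx : ρ ^ 2 ≤ ρ ^ (m + 2) := pow_le_pow_right₀ (by linarith) (by omega)
  rw [← hA] at hx
  nlinarith

set_option maxHeartbeats 1000000 in
private lemma case_small_a {a ρ₁ ρ₂ B₁ B₂ : ℝ} {m : ℕ} (hρ₁ : 0 < ρ₁) (hρ₂ : 0 < ρ₂)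
    (hcon : ρ₁ ≤ ρ₂) (ha0 : 0 < a) (ha1 : a ≤ 1) (hB₁0 : 0 < B₁) (hB₁₂ : B₁ ≤ B₂)
    (hB₂def : B₂ = ρ₂ ^ (m + 1)) (hP : 1 < a ^ 2 * (ρ₁ * ρ₂))
    (hstar : ρ₁ * ρ₂ * (ρ₂ * B₂ ^ 2 - ρ₁ * B₁ ^ 2) < (ρ₂ - ρ₁) * (a ^ 2 * (ρ₁ * ρ₂) - 1)) :
    False := by
  have hs0 : (0 : ℝ) ≤ ρ₂ - ρ₁ := by linarith
  have hp0 : (0 : ℝ) < ρ₁ * ρ₂ := mul_pos hρ₁ hρ₂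
  have hp1 : 1 < ρ₁ * ρ₂ := by nlinarith
  have hρ₂1 : 1 ≤ ρ₂ := by nlinarith [mul_le_mul_of_nonneg_right hcon hρ₂.le]
  have hB₂1 : 1 ≤ B₂ := by
    rw [hB₂def]
    simpa using pow_le_pow_left₀ (by norm_num : (0:ℝ) ≤ 1) hρ₂1 (m + 1)
  have hBsq : B₁ ^ 2 ≤ B₂ ^ 2 := by nlinarith
  have h5 : ρ₁ * B₁ ^ 2 ≤ ρ₁ * B₂ ^ 2 := mul_le_mul_of_nonneg_left hBsq hρ₁.le
  have hL1 : ρ₁ * ρ₂ * (B₂ ^ 2 * (ρ₂ - ρ₁)) ≤ ρ₁ * ρ₂ * (ρ₂ * B₂ ^ 2 - ρ₁ * B₁ ^ 2) := by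
    have := mul_le_mul_of_nonneg_left (sub_le_sub_left h5 (ρ₂ * B₂ ^ 2)) hp0.le
    nlinarith [this]
  have hL2 : ρ₁ * ρ₂ * (ρ₂ - ρ₁) ≤ ρ₁ * ρ₂ * (B₂ ^ 2 * (ρ₂ - ρ₁)) := by
    nlinarith [mul_nonneg (mul_nonneg hp0.le hs0) (by nlinarith : (0:ℝ) ≤ B₂ ^ 2 - 1)]
  have hR : (ρ₂ - ρ₁) * (a ^ 2 * (ρ₁ * ρ₂) - 1) ≤ (ρ₂ - ρ₁) * (ρ₁ * ρ₂ - 1) := by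
    nlinarith [mul_nonneg (mul_nonneg hs0 hp0.le) (by nlinarith : (0:ℝ) ≤ 1 - a ^ 2)]
  nlinarith [hstar, hL1, hL2, hR]

set_option maxHeartbeats 1000000 in
private lemma case_large_a {a ρ₁ ρ₂ B₁ B₂ K : ℝ} (hρ₁ : 0 < ρ₁) (hρ₂ : 0 < ρ₂)
    (hcon : ρ₁ ≤ ρ₂) (h3₂ : ρ₂ ≤ 3) (ha1 : 1 < a) (ha2 : a < 2)
    (hB₁0 : 0 < B₁) (hB₂0 : 0 < B₂) (hρhalf : 1 / 2 < ρ₁) (ht : (a - 1) / 2 ≤ ρ₁ * B₁)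
    (hK0 : 0 ≤ K) (hKd : 1296 ≤ K * ((a - 1) / 2) ^ 2)
    (hgeom : K * B₁ ^ 2 * (ρ₂ - ρ₁) ≤ ρ₂ * B₂ ^ 2 - ρ₁ * B₁ ^ 2)
    (hstar : ρ₁ * ρ₂ * (ρ₂ * B₂ ^ 2 - ρ₁ * B₁ ^ 2) < (ρ₂ - ρ₁) * (a ^ 2 * (ρ₁ * ρ₂) - 1)) :
    False := by
  have hs0 : (0 : ℝ) ≤ ρ₂ - ρ₁ := by linarith
  have hp0 : (0 : ℝ) < ρ₁ * ρ₂ := mul_pos hρ₁ hρ₂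
  have h3₁ : ρ₁ ≤ 3 := le_trans hcon h3₂
  have hδ0 : (0 : ℝ) ≤ (a - 1) / 2 := by linarith
  have hδsq : ((a - 1) / 2) ^ 2 ≤ (ρ₁ * B₁) ^ 2 := pow_le_pow_left₀ hδ0 ht 2
  have hρsq : ρ₁ ^ 2 ≤ 9 := by nlinarith
  have hρB : (ρ₁ * B₁) ^ 2 ≤ 9 * B₁ ^ 2 := by
    have := mul_le_mul_of_nonneg_right hρsq (sq_nonneg B₁)
    calc (ρ₁ * B₁) ^ 2 = ρ₁ ^ 2 * B₁ ^ 2 := by ring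
      _ ≤ 9 * B₁ ^ 2 := this
  have h9B : ((a - 1) / 2) ^ 2 ≤ 9 * B₁ ^ 2 := le_trans hδsq hρB
  have hKB : 144 ≤ K * B₁ ^ 2 := by
    have := mul_le_mul_of_nonneg_left h9B hK0
    linarith
  have hp4 : (1 : ℝ) / 4 ≤ ρ₁ * ρ₂ := by nlinarith
  have h36 : (36 : ℝ) ≤ ρ₁ * ρ₂ * (K * B₁ ^ 2) := by
    have := mul_le_mul hp4 hKB (by norm_num) hp0.le
    linarith
  have hLge : 36 * (ρ₂ - ρ₁) ≤ ρ₁ * ρ₂ * (ρ₂ * B₂ ^ 2 - ρ₁ * B₁ ^ 2) := by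
    have hml := mul_le_mul_of_nonneg_left hgeom hp0.le
    have hm2 := mul_le_mul_of_nonneg_right h36 hs0
    nlinarith [hml, hm2]
  have ha4 : a ^ 2 ≤ 4 := by nlinarith
  have hp9 : ρ₁ * ρ₂ ≤ 9 := by nlinarith
  have hub : a ^ 2 * (ρ₁ * ρ₂) ≤ 36 := by
    have := mul_le_mul ha4 hp9 hp0.le (by norm_num : (0:ℝ) ≤ 4)
    linarith
  have hRle : (ρ₂ - ρ₁) * (a ^ 2 * (ρ₁ * ρ₂) - 1) ≤ (ρ₂ - ρ₁) * 35 := by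
    exact mul_le_mul_of_nonneg_left (by linarith) hs0
  linarith

set_option maxHeartbeats 1000000 in
theorem modulus_decreasing_in_argument (a : ℝ) (ha : a ∈ Set.Ioo (0 : ℝ) 2) :
    ∃ n₀ : ℕ, ∀ n : ℕ, n₀ < n →
      ∀ ρ₁ ρ₂ φ₁ φ₂ : ℝ, 0 < ρ₁ → 0 < ρ₂ →
        ((ρ₁ : ℂ) * Complex.exp (φ₁ * Complex.I)) ^ n
          - (a : ℂ) * ((ρ₁ : ℂ) * Complex.exp (φ₁ * Complex.I)) - 1 = 0 →
        ((ρ₂ : ℂ) * Complex.exp (φ₂ * Complex.I)) ^ n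
          - (a : ℂ) * ((ρ₂ : ℂ) * Complex.exp (φ₂ * Complex.I)) - 1 = 0 →
        0 ≤ φ₁ → φ₁ < φ₂ → φ₂ < Real.pi → ρ₂ < ρ₁ := by
  obtain ⟨ha0, ha2⟩ := ha
  obtain ⟨n₁, hn₁⟩ : ∃ N : ℕ, ∀ n ≥ N, 1 < a → (n : ℝ) * ((a + 1) / (2 * a)) ^ (n - 1) < a := by
    by_cases h1a : 1 < a
    · set r : ℝ := (a + 1) / (2 * a) with hrdef
      have hr0 : 0 < r := by positivity
      have hr1 : r < 1 := by rw [div_lt_one (by linarith)]; linarith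
      have ht := tendsto_self_mul_const_pow_of_lt_one hr0.le hr1
      have hev : ∀ᶠ n : ℕ in atTop, (n : ℝ) * r ^ n < a * r :=
        ht.eventually_lt_const (by positivity)
      obtain ⟨N, hN⟩ := eventually_atTop.mp hev
      refine ⟨N + 1, fun n hn _ => ?_⟩
      have h1 : (n : ℝ) * r ^ n < a * r := hN n (by omega)
      have h2 : r ^ n = r ^ (n - 1) * r := by
        rw [← pow_succ]; congr 1; omega
      rw [h2, ← mul_assoc] at h1
      exact lt_of_mul_lt_mul_right h1 hr0.le
    · exact ⟨0, fun n _ h => absurd h h1a⟩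
  obtain ⟨n₂, hn₂⟩ : ∃ N : ℕ, ∀ n ≥ N, 1 < a →
      (1296 : ℝ) ≤ (2 * (n : ℝ) - 1) * ((a - 1) / 2) ^ 2 := by
    by_cases h1a : 1 < a
    · obtain ⟨N, hN⟩ := exists_nat_gt ((1296 : ℝ) / ((a - 1) / 2) ^ 2)
      refine ⟨N, fun n hn _ => ?_⟩
      have hδ : (0 : ℝ) < ((a - 1) / 2) ^ 2 := pow_pos (by linarith) 2
      have hNn : ((1296 : ℝ) / ((a - 1) / 2) ^ 2) < (n : ℝ) := by
        calc ((1296 : ℝ) / ((a - 1) / 2) ^ 2) < (N : ℝ) := hN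
          _ ≤ (n : ℝ) := by exact_mod_cast hn
      rw [div_lt_iff₀ hδ] at hNn
      nlinarith [hδ, Nat.cast_nonneg (α := ℝ) n]
    · exact ⟨0, fun n _ h => absurd h h1a⟩
  refine ⟨max (max n₁ n₂) 2, fun n hn ρ₁ ρ₂ φ₁ φ₂ hρ₁ hρ₂ h1 h2 hφ₁ hφ₁₂ hφ₂π => ?_⟩
  by_contra hcon
  push_neg at hcon
  obtain ⟨m, rfl⟩ : ∃ m, n = m + 2 := ⟨n - 2, by omega⟩
  have hn₁' := hn₁ (m + 2) (by omega)
  have hn₂' := hn₂ (m + 2) (by omega)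
  clear hn₁ hn₂ hn
  have hφ₁π : φ₁ < Real.pi := hφ₁₂.trans hφ₂π
  have hcos : Real.cos φ₂ < Real.cos φ₁ :=
    Real.cos_lt_cos_of_nonneg_of_le_pi hφ₁ hφ₂π.le hφ₁₂
  have hE₁ := root_modulus_eq hρ₁ h1
  have hE₂ := root_modulus_eq hρ₂ h2
  set B₁ : ℝ := ρ₁ ^ (m + 1) with hB₁def
  set B₂ : ℝ := ρ₂ ^ (m + 1) with hB₂def
  have hB₁0 : 0 < B₁ := pow_pos hρ₁ _
  have hB₂0 : 0 < B₂ := pow_pos hρ₂ _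
  have hA₁ : ρ₁ ^ (m + 2) = ρ₁ * B₁ := by rw [hB₁def, ← pow_succ']
  have hA₂ : ρ₂ ^ (m + 2) = ρ₂ * B₂ := by rw [hB₂def, ← pow_succ']
  rw [hA₁] at hE₁
  rw [hA₂] at hE₂
  have hstar : ρ₁ * ρ₂ * (ρ₂ * B₂ ^ 2 - ρ₁ * B₁ ^ 2) <
      (ρ₂ - ρ₁) * (a ^ 2 * (ρ₁ * ρ₂) - 1) := by
    have hcm : 2 * a * ρ₁ * ρ₂ * Real.cos φ₂ < 2 * a * ρ₁ * ρ₂ * Real.cos φ₁ :=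
      mul_lt_mul_of_pos_left hcos (by positivity)
    have e1 : 2 * a * ρ₁ * ρ₂ * Real.cos φ₁ = ρ₂ * ((ρ₁ * B₁) ^ 2 - a ^ 2 * ρ₁ ^ 2 - 1) := by
      linear_combination (-ρ₂) * hE₁
    have e2 : 2 * a * ρ₁ * ρ₂ * Real.cos φ₂ = ρ₁ * ((ρ₂ * B₂) ^ 2 - a ^ 2 * ρ₂ ^ 2 - 1) := by
      linear_combination (-ρ₁) * hE₂
    nlinarith [hcm]
  have hs0 : (0 : ℝ) ≤ ρ₂ - ρ₁ := by linarith
  have hB₁₂ : B₁ ≤ B₂ := pow_le_pow_left₀ hρ₁.le hcon _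
  rcases le_or_gt (a ^ 2 * (ρ₁ * ρ₂)) 1 with hP | hP
  · -- trivial case : RHS ≤ 0 ≤ LHS
    have hBsq : B₁ ^ 2 ≤ B₂ ^ 2 := by nlinarith
    have hq : ρ₁ * B₁ ^ 2 ≤ ρ₂ * B₂ ^ 2 :=
      mul_le_mul hcon hBsq (sq_nonneg B₁) hρ₂.le
    have hL : (0 : ℝ) ≤ ρ₁ * ρ₂ * (ρ₂ * B₂ ^ 2 - ρ₁ * B₁ ^ 2) :=
      mul_nonneg (by positivity) (by linarith)
    have hR : (ρ₂ - ρ₁) * (a ^ 2 * (ρ₁ * ρ₂) - 1) ≤ 0 :=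
      mul_nonpos_of_nonneg_of_nonpos hs0 (by linarith)
    linarith
  rcases le_or_gt a 1 with ha1 | ha1
  · exact case_small_a hρ₁ hρ₂ hcon ha0 ha1 hB₁0 hB₁₂ hB₂def hP hstar
  · -- 1 < a
    have hle₂ : ρ₂ * B₂ ≤ a * ρ₂ + 1 :=
      root_pow_upper hρ₂ hB₂0 (Real.cos_le_one φ₂) hE₂ ha0
    have h3₂ : ρ₂ ≤ 3 := rho_le_three hρ₂ hB₂0 hB₂def ha2 hle₂
    have hr₁ : (a + 1) / (2 * a) < ρ₁ := by
      by_contra hsmall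
      push_neg at hsmall
      have hrlt1 : (a + 1) / (2 * a) < 1 := by rw [div_lt_one (by linarith)]; linarith
      rcases eq_or_lt_of_le hφ₁ with hφ0 | hφpos
      · rw [← hφ0, Real.cos_zero] at hE₁
        have hgt1 : 1 < ρ₁ * B₁ := by
          nlinarith [mul_pos hρ₁ hB₁0, mul_pos ha0 hρ₁]
        have hle1 : ρ₁ * B₁ ≤ 1 := by
          have hρle1 : ρ₁ ≤ 1 := by linarith
          calc ρ₁ * B₁ = ρ₁ ^ (m + 2) := hA₁.symm
            _ ≤ 1 := pow_le_one₀ hρ₁.le hρle1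
        linarith
      · set z : ℂ := (ρ₁ : ℂ) * Complex.exp (φ₁ * Complex.I) with hzdef
        have hz : z ^ (m + 2) = a * z + 1 := by linear_combination h1
        have hzc : ((starRingEnd ℂ) z) ^ (m + 2) = a * ((starRingEnd ℂ) z) + 1 := by
          have hc := congrArg (starRingEnd ℂ) hz
          simpa [map_pow, map_mul, map_add, Complex.conj_ofReal] using hc
        have hzim : z.im = ρ₁ * Real.sin φ₁ := by
          simp [hzdef, Complex.mul_im, Complex.exp_ofReal_mul_I_re, Complex.exp_ofReal_mul_I_im]
        have hne : z ≠ (starRingEnd ℂ) z := by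
          intro heq
          have him0 : z.im = 0 := Complex.conj_eq_iff_im.mp heq.symm
          rw [hzim] at him0
          have hsin : 0 < Real.sin φ₁ := Real.sin_pos_of_pos_of_lt_pi hφpos hφ₁π
          nlinarith
        have habsz : ‖z‖ = ρ₁ := by
          rw [hzdef, norm_mul, Complex.norm_real, Complex.norm_exp_ofReal_mul_I,
            Real.norm_eq_abs, abs_of_pos hρ₁, mul_one]
        have habsc : ‖(starRingEnd ℂ) z‖ = ρ₁ := by
          rw [Complex.norm_conj, habsz]
        exact not_two_small_roots ha0 hne hz hzc (by positivity)
          (by rw [habsz]; exact hsmall) (by rw [habsc]; exact hsmall) (hn₁' ha1)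
    rw [div_lt_iff₀ (by linarith : (0:ℝ) < 2 * a)] at hr₁
    have hδt : (a - 1) / 2 ≤ ρ₁ * B₁ := by
      have hAlow : a * ρ₁ - 1 ≤ ρ₁ * B₁ :=
        root_pow_lower hρ₁ hB₁0 (Real.neg_one_le_cos φ₁) hE₁ ha0
      nlinarith [hr₁]
    have hρhalf : (1 : ℝ) / 2 < ρ₁ := by nlinarith [hr₁, ha0, ha2]
    have hgeom := pow_sub_pow_ge_aux hρ₁.le hcon (2 * m + 2)
    have hc1 : ρ₁ ^ (2 * m + 2) = B₁ ^ 2 := by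
      rw [hB₁def, ← pow_mul]; congr 1; ring
    have hc2 : ρ₂ ^ (2 * m + 2 + 1) = ρ₂ * B₂ ^ 2 := by
      rw [hB₂def, ← pow_mul, ← pow_succ']; congr 1; ring_nf
    have hc3 : ρ₁ ^ (2 * m + 2 + 1) = ρ₁ * B₁ ^ 2 := by
      rw [hB₁def, ← pow_mul, ← pow_succ']; congr 1; ring_nf
    rw [hc1, hc2, hc3] at hgeom
    push_cast at hgeom hn₂'
    have hgeom' : (2 * (m : ℝ) + 3) * B₁ ^ 2 * (ρ₂ - ρ₁) ≤ ρ₂ * B₂ ^ 2 - ρ₁ * B₁ ^ 2 := by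
      convert hgeom using 2 <;> ring
    have hKd : (1296 : ℝ) ≤ (2 * (m : ℝ) + 3) * ((a - 1) / 2) ^ 2 := by
      have := hn₂' ha1
      nlinarith [this]
    exact case_large_a hρ₁ hρ₂ hcon h3₂ ha1 ha2 hB₁0 hB₂0 hρhalf hδt
      (by positivity) hKd hgeom' hstar
end

section
/- Let a be real with |a| > 2. Then for all sufficiently large n, the trinomial x^n - a x - 1 has exactly one root inside the open unit disk, and the Mahler measure M(x^n - a x - 1) tends to |a| as n → ∞. -/
open Filter
open scoped Classical

open Polynomial in
private lemma P_monic (a : ℂ) {n : ℕ} (hn : 2 ≤ n) :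
    (X ^ n - C a * X - 1 : ℂ[X]).Monic := by
  have h1 : (C a * X + 1 : ℂ[X]).degree < (n : ℕ) := by
    refine lt_of_le_of_lt (Polynomial.degree_add_le _ _) ?_
    have h2 : (C a * X : ℂ[X]).degree ≤ 1 := by
      refine le_trans (Polynomial.degree_mul_le _ _) ?_
      simpa using add_le_add Polynomial.degree_C_le le_rfl
    have h3 : (1 : ℂ[X]).degree ≤ 1 := le_trans Polynomial.degree_one_le (by norm_num)
    refine lt_of_le_of_lt (max_le h2 h3) ?_
    exact_mod_cast (by exact_mod_cast Nat.lt_of_lt_of_le one_lt_two hn :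
      (1:ℕ) < (n:ℕ))
  have := Polynomial.monic_X_pow_sub h1
  rw [show (X ^ n - C a * X - 1 : ℂ[X]) = X ^ n - (C a * X + 1) by ring]
  exact this

open Polynomial in
private lemma P_natDegree (a : ℂ) {n : ℕ} (hn : 2 ≤ n) :
    (X ^ n - C a * X - 1 : ℂ[X]).natDegree = n := by
  have h2 : (C a * X + 1 : ℂ[X]).natDegree < (X ^ n : ℂ[X]).natDegree := by
    have : (C a * X + 1 : ℂ[X]).natDegree ≤ 1 := by compute_degree
    simpa [Polynomial.natDegree_X_pow] using lt_of_le_of_lt this (by omega)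
  have h3 := Polynomial.natDegree_sub_eq_left_of_natDegree_lt h2
  rw [show (X ^ n - C a * X - 1 : ℂ[X]) = X ^ n - (C a * X + 1) by ring, h3,
    Polynomial.natDegree_X_pow]

open Polynomial in
private lemma P_roots_iff (a : ℂ) {n : ℕ} (hn : 2 ≤ n) (z : ℂ) :
    z ∈ (X ^ n - C a * X - 1 : ℂ[X]).roots ↔ z ^ n = a * z + 1 := by
  rw [Polynomial.mem_roots ((P_monic a hn).ne_zero)]
  simp only [Polynomial.IsRoot, Polynomial.eval_sub, Polynomial.eval_pow,
    Polynomial.eval_mul, Polynomial.eval_X, Polynomial.eval_C, Polynomial.eval_one]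
  constructor
  · intro h; linear_combination h
  · intro h; linear_combination h

private lemma root_bound {a : ℝ} (ha : 2 < |a|) {n : ℕ} {z : ℂ}
    (hz : z ^ n = (a : ℂ) * z + 1) (h1 : ‖z‖ < 1) :
    ‖z‖ ≤ 2 / |a| := by
  have ha0 : (0:ℝ) < |a| := by linarith
  rw [le_div_iff₀ ha0]
  have h2 : ‖((a:ℂ) * z)‖ ≤ ‖((a:ℂ) * z + 1)‖ + 1 := by
    have := norm_add_le ((a:ℂ) * z + 1) (-1)
    simpa using this
  have h3 : ‖((a:ℂ) * z + 1)‖ = (‖z‖) ^ n := by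
    rw [← hz, norm_pow]
  have h4 : (‖z‖) ^ n ≤ 1 := pow_le_one₀ (norm_nonneg z) h1.le
  have h5 : ‖((a:ℂ)*z)‖ = |a| * ‖z‖ := by
    rw [norm_mul, Complex.norm_real, Real.norm_eq_abs]
  nlinarith [norm_nonneg z]

private lemma exists_real_root {a : ℝ} (ha : 2 < |a|) {n : ℕ} (hn : 1 ≤ n) :
    ∃ t : ℝ, t ^ n = a * t + 1 ∧ |t| ≤ 2 / |a| := by
  have ha0 : (0:ℝ) < |a| := by linarith
  have hr1 : 2 / |a| < 1 := (div_lt_one ha0).mpr ha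
  have hane : a ≠ 0 := by
    intro h; rw [h] at ha; simp at ha; linarith
  set f : ℝ → ℝ := fun x => x ^ n - a * x - 1 with hf
  have hc : ContinuousOn f (Set.uIcc 0 (-2/a)) := by fun_prop
  have hfb : f (-2/a) = (-2/a) ^ n + 1 := by
    simp only [hf]
    field_simp [hf]
    ring
  have habs : |(-2/a) ^ n| < 1 := by
    rw [abs_pow]
    refine pow_lt_one₀ (abs_nonneg _) ?_ (by omega)
    rw [abs_div, abs_neg]
    simpa [abs_of_pos] using hr1
  have hfb_pos : 0 < f (-2/a) := by
    rw [hfb]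
    have := abs_lt.mp habs
    linarith [this.1]
  have h0 : f 0 = -1 := by simp [hf, zero_pow (by omega : n ≠ 0)]
  have hmem : (0:ℝ) ∈ Set.uIcc (f 0) (f (-2/a)) := by
    rw [Set.mem_uIcc]
    left
    constructor
    · rw [h0]; norm_num
    · exact hfb_pos.le
  obtain ⟨t, ht, hft⟩ := intermediate_value_uIcc hc hmem
  refine ⟨t, by have : f t = 0 := hft; simp [hf] at this; linarith, ?_⟩
  have hb : |(-2/a : ℝ)| = 2 / |a| := by
    rw [abs_div, abs_neg]; norm_num
  rcases Set.mem_uIcc.mp ht with ⟨h1, h2⟩ | ⟨h1, h2⟩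
  · -- 0 ≤ t ≤ -2/a
    rw [abs_of_nonneg h1, ← hb]
    exact h2.trans (le_abs_self _)
  · -- -2/a ≤ t ≤ 0
    rw [abs_of_nonpos h2, ← hb]
    have := neg_abs_le (-2/a : ℝ)
    linarith

private lemma uniq_root {a : ℝ} (ha : 2 < |a|) {n : ℕ}
    (hb : (n : ℝ) * (2 / |a|) ^ (n - 1) < 2) {z w : ℂ}
    (hz : z ^ n = (a:ℂ) * z + 1) (hw : w ^ n = (a:ℂ) * w + 1)
    (hz1 : ‖z‖ ≤ 2 / |a|) (hw1 : ‖w‖ ≤ 2 / |a|) : z = w := by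
  by_contra hne
  have key : (∑ i ∈ Finset.range n, z ^ i * w ^ (n - 1 - i)) = (a : ℂ) := by
    have h1 : (∑ i ∈ Finset.range n, z ^ i * w ^ (n - 1 - i)) * (z - w) = z ^ n - w ^ n :=
      geom_sum₂_mul z w n
    have h2 : z ^ n - w ^ n = (a:ℂ) * (z - w) := by rw [hz, hw]; ring
    have h3 : ((∑ i ∈ Finset.range n, z ^ i * w ^ (n - 1 - i)) - (a:ℂ)) * (z - w) = 0 := by
      rw [sub_mul, h1, h2, sub_self]
    rcases mul_eq_zero.mp h3 with h | h
    · exact sub_eq_zero.mp h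
    · exact absurd (sub_eq_zero.mp h) hne
  have hbound : |a| ≤ (n : ℝ) * (2 / |a|) ^ (n - 1) := by
    have := congrArg norm key
    rw [Complex.norm_real, Real.norm_eq_abs] at this
    calc |a| = ‖(∑ i ∈ Finset.range n, z ^ i * w ^ (n - 1 - i))‖ := this.symm
      _ ≤ ∑ i ∈ Finset.range n, ‖(z ^ i * w ^ (n - 1 - i))‖ :=
          norm_sum_le _ _
      _ ≤ ∑ i ∈ Finset.range n, (2 / |a|) ^ (n - 1) := by
          refine Finset.sum_le_sum fun i hi => ?_
          rw [norm_mul, norm_pow, norm_pow]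
          have hr0 : (0:ℝ) ≤ 2 / |a| := by positivity
          calc ‖z‖ ^ i * ‖w‖ ^ (n - 1 - i)
              ≤ (2 / |a|) ^ i * (2 / |a|) ^ (n - 1 - i) := by
                exact mul_le_mul (pow_le_pow_left₀ (norm_nonneg z) hz1 i)
                  (pow_le_pow_left₀ (norm_nonneg w) hw1 _) (by positivity) (by positivity)
            _ = (2 / |a|) ^ (n - 1) := by
                rw [← pow_add]
                congr 1
                have := Finset.mem_range.mp hi
                omega
      _ = (n : ℝ) * (2 / |a|) ^ (n - 1) := by
          rw [Finset.sum_const, Finset.card_range, nsmul_eq_mul]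
  linarith

open Polynomial in
private lemma deriv_root_eq (a : ℂ) {n : ℕ} (hn : 2 ≤ n) {z : ℂ}
    (h : 2 ≤ (X ^ n - C a * X - 1 : ℂ[X]).roots.count z) :
    (n : ℂ) * z ^ (n - 1) = a := by
  have hdvd : (X - C z) ^ 2 ∣ (X ^ n - C a * X - 1 : ℂ[X]) := by
    have := Polynomial.pow_rootMultiplicity_dvd (X ^ n - C a * X - 1 : ℂ[X]) z
    refine dvd_trans (pow_dvd_pow _ ?_) this
    rwa [← Polynomial.count_roots]
  obtain ⟨q, hq⟩ := hdvd
  have hder : (X ^ n - C a * X - 1 : ℂ[X]).derivative.eval z = 0 := by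
    rw [hq]
    simp [Polynomial.derivative_mul, Polynomial.derivative_pow, Polynomial.eval_mul,
      Polynomial.eval_add, sub_self]
  have : (X ^ n - C a * X - 1 : ℂ[X]).derivative.eval z
      = (n : ℂ) * z ^ (n - 1) - a := by
    simp [Polynomial.derivative_sub, Polynomial.derivative_X_pow]
  rw [this] at hder
  linear_combination hder

open Polynomial in
private lemma filter_eq_singleton {a : ℝ} (ha : 2 < |a|) {n : ℕ} (hn : 2 ≤ n)
    (hb : (n : ℝ) * (2 / |a|) ^ (n - 1) < 2) :
    ∃ z : ℂ, ((X ^ n - C (a:ℂ) * X - 1 : ℂ[X]).roots.filter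
        (fun z => ‖z‖ < 1)) = {z} ∧ z ^ n = (a:ℂ) * z + 1 ∧
        ‖z‖ ≤ 2 / |a| := by
  have ha0 : (0:ℝ) < |a| := by linarith
  have hr1 : 2 / |a| < 1 := (div_lt_one ha0).mpr ha
  set F := ((X ^ n - C (a:ℂ) * X - 1 : ℂ[X]).roots.filter
      (fun z => ‖z‖ < 1)) with hF
  -- membership facts
  have memF : ∀ z : ℂ, z ∈ F → z ^ n = (a:ℂ) * z + 1 ∧ ‖z‖ ≤ 2 / |a| := by
    intro z hz
    obtain ⟨hz1, hz2⟩ := Multiset.mem_filter.mp hz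
    have heq := (P_roots_iff (a:ℂ) hn z).mp hz1
    exact ⟨heq, root_bound ha heq hz2⟩
  -- existence
  obtain ⟨t, ht, htb⟩ := exists_real_root ha (by omega : 1 ≤ n)
  have htC : ((t:ℂ)) ^ n = (a:ℂ) * (t:ℂ) + 1 := by
    have := congrArg (fun x : ℝ => (x : ℂ)) ht
    push_cast at this
    exact this
  have htabs : ‖(t:ℂ)‖ = |t| := by rw [Complex.norm_real, Real.norm_eq_abs]
  have htF : (t:ℂ) ∈ F := by
    rw [hF, Multiset.mem_filter]
    refine ⟨(P_roots_iff (a:ℂ) hn _).mpr htC, ?_⟩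
    rw [htabs]; linarith
  -- at most one
  have hle : Multiset.card F ≤ 1 := by
    by_contra hcard
    push_neg at hcard
    have hcard2 : 2 ≤ Multiset.card F := hcard
    obtain ⟨z, hzF⟩ := Multiset.exists_mem_of_ne_zero
      (by intro h; rw [h] at hcard2; simp at hcard2 : F ≠ 0)
    obtain ⟨s, hs⟩ := Multiset.exists_cons_of_mem hzF
    have hcs : 1 ≤ Multiset.card s := by
      rw [hs] at hcard2; simp at hcard2; omega
    obtain ⟨w, hws⟩ := Multiset.exists_mem_of_ne_zero
      (by intro h; rw [h] at hcs; simp at hcs : s ≠ 0)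
    have hwF : w ∈ F := by rw [hs]; exact Multiset.mem_cons_of_mem hws
    obtain ⟨hze, hzb⟩ := memF z hzF
    obtain ⟨hwe, hwb⟩ := memF w hwF
    by_cases hzw : z = w
    · -- double root
      have hcnt : 2 ≤ F.count z := by
        rw [hs, Multiset.count_cons_self]
        have : 1 ≤ s.count z := Multiset.one_le_count_iff_mem.mpr (hzw ▸ hws)
        omega
      have hcnt2 : 2 ≤ ((X ^ n - C (a:ℂ) * X - 1 : ℂ[X]).roots).count z :=
        le_trans hcnt (Multiset.count_le_of_le z (Multiset.filter_le _ _))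
      have hder := deriv_root_eq (a:ℂ) hn hcnt2
      have habs : |a| = (n:ℝ) * (‖z‖) ^ (n-1) := by
        have := congrArg norm hder
        rw [norm_mul, norm_pow, Complex.norm_natCast, Complex.norm_real, Real.norm_eq_abs] at this
        linarith
      have : (n:ℝ) * (‖z‖) ^ (n-1) ≤ (n:ℝ) * (2/|a|) ^ (n-1) := by
        have := pow_le_pow_left₀ (norm_nonneg z) hzb (n-1)
        have hn0 : (0:ℝ) ≤ n := Nat.cast_nonneg n
        nlinarith
      linarith
    · exact hzw (uniq_root ha hb hze hwe hzb hwb)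
  have hcard1 : Multiset.card F = 1 := by
    have : 1 ≤ Multiset.card F := by
      have : F ≠ 0 := by
        intro h; rw [h] at htF; simp at htF
      have := Multiset.card_pos.mpr this
      omega
    omega
  obtain ⟨c, hc⟩ := Multiset.card_eq_one.mp hcard1
  refine ⟨c, hc, ?_⟩
  have : (t:ℂ) = c := by rw [hc] at htF; exact Multiset.mem_singleton.mp htF
  rw [← this]
  refine ⟨htC, by rw [htabs]; exact htb⟩

open Polynomial in
private lemma abs_prod_roots (a : ℝ) {n : ℕ} (hn : 2 ≤ n) :
    (((X ^ n - C (a:ℂ) * X - 1 : ℂ[X]).roots).map (fun w => ‖w‖)).prod = 1 := by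
  have hsplit : (X ^ n - C (a:ℂ) * X - 1 : ℂ[X]).Splits :=
    IsAlgClosed.splits _
  have hc := hsplit.coeff_zero_eq_prod_roots_of_monic (P_monic (a:ℂ) hn)
  have hc0 : (X ^ n - C (a:ℂ) * X - 1 : ℂ[X]).coeff 0 = -1 := by
    have h0 : ¬ (n = 0) := by omega
    simp [Polynomial.coeff_sub, Polynomial.coeff_X_pow, Polynomial.coeff_one,
      Ne.symm h0, h0]
  rw [hc0] at hc
  have habs := congrArg norm hc
  rw [norm_mul, norm_pow] at habs
  simp only [norm_neg, norm_one, one_pow, one_mul] at habs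
  rw [habs]
  exact (map_multiset_prod (normHom : ℂ →*₀ ℝ) _).symm

open Polynomial in
private lemma M_eq_inv_abs {a : ℝ} {n : ℕ} (hn : 2 ≤ n) {z : ℂ}
    (hfil : ((X ^ n - C (a:ℂ) * X - 1 : ℂ[X]).roots.filter
        (fun z => ‖z‖ < 1)) = {z}) (hz1 : ‖z‖ < 1) :
    (((X ^ n - C (a:ℂ) * X - 1 : ℂ[X]).roots).map
        (fun w => max (‖w‖) 1)).prod * ‖z‖ = 1 := by
  set R := (X ^ n - C (a:ℂ) * X - 1 : ℂ[X]).roots with hR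
  have hmin : ((R.map (fun w => min (‖w‖) 1)).prod) = ‖z‖ := by
    have hsplit : R = R.filter (fun z => ‖z‖ < 1)
        + R.filter (fun z => ¬ ‖z‖ < 1) := (Multiset.filter_add_not _ _).symm
    rw [hsplit, Multiset.map_add, Multiset.prod_add, hfil]
    have h1 : (({z} : Multiset ℂ).map (fun w => min (‖w‖) 1)).prod
        = ‖z‖ := by
      simp [min_eq_left hz1.le]
    have h2 : ((R.filter (fun z => ¬ ‖z‖ < 1)).map
        (fun w => min (‖w‖) 1)).prod = 1 := by
      refine Multiset.prod_eq_one ?_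
      intro x hx
      obtain ⟨w, hw, rfl⟩ := Multiset.mem_map.mp hx
      have := (Multiset.mem_filter.mp hw).2
      push_neg at this
      simp [min_eq_right this]
    rw [h1, h2, mul_one]
  calc (R.map (fun w => max (‖w‖) 1)).prod * ‖z‖
      = (R.map (fun w => max (‖w‖) 1)).prod
        * (R.map (fun w => min (‖w‖) 1)).prod := by rw [hmin]
    _ = (R.map (fun w => max (‖w‖) 1 * min (‖w‖) 1)).prod := by
        rw [← Multiset.prod_map_mul]
    _ = (R.map (fun w => ‖w‖)).prod := by
        congr 1
        refine Multiset.map_congr rfl ?_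
        intro w _
        rw [max_mul_min]
        simp
    _ = 1 := abs_prod_roots a hn

theorem big_a_case (a : ℝ) (ha : 2 < |a|) (M : ℕ → ℝ)
    (hM : ∀ n : ℕ, M n = ((Polynomial.X ^ n - Polynomial.C (a : ℂ) * Polynomial.X
      - 1).roots.map (fun z => max (‖z‖) 1)).prod) :
    (∃ n₀ : ℕ, ∀ n : ℕ, n₀ < n →
      (((Polynomial.X ^ n - Polynomial.C (a : ℂ) * Polynomial.X - 1).roots.filter
        (fun z => ‖z‖ < 1)).card) = 1) ∧
    Tendsto M atTop (nhds |a|) := by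
  have ha0 : (0:ℝ) < |a| := by linarith
  have hane : a ≠ 0 := fun h => by rw [h] at ha; simp at ha; linarith
  set r : ℝ := 2 / |a| with hr
  have hr0 : (0:ℝ) ≤ r := by positivity
  have hr1 : r < 1 := (div_lt_one ha0).mpr ha
  -- choose n₁
  have htend : Tendsto (fun m : ℕ => ((m:ℝ) + 1) * r ^ m) atTop (nhds 0) := by
    have h1 := tendsto_self_mul_const_pow_of_lt_one hr0 hr1
    have h2 := tendsto_pow_atTop_nhds_zero_of_lt_one hr0 hr1
    have := h1.add h2
    simp only [add_zero] at this
    refine this.congr fun m => ?_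
    ring
  obtain ⟨n₁, hn₁⟩ := eventually_atTop.mp (htend.eventually_lt_const (by norm_num : (0:ℝ) < 2))
  set n₀ := n₁ + 2 with hn₀
  have key : ∀ n : ℕ, n₀ < n → ∃ z : ℂ,
      ((Polynomial.X ^ n - Polynomial.C (a:ℂ) * Polynomial.X - 1).roots.filter
        (fun z => ‖z‖ < 1)) = {z} ∧ z ^ n = (a:ℂ) * z + 1 ∧
        ‖z‖ ≤ r := by
    intro n hn
    have hb : (n : ℝ) * r ^ (n - 1) < 2 := by
      have := hn₁ (n - 1) (by omega)
      have hc : ((n - 1 : ℕ) : ℝ) + 1 = (n : ℝ) := by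
        have : ((n - 1 : ℕ) : ℝ) = (n : ℝ) - 1 := by
          push_cast [Nat.cast_sub (by omega : 1 ≤ n)]
          ring
        rw [this]; ring
      rwa [hc] at this
    exact filter_eq_singleton ha (by omega) hb
  constructor
  · refine ⟨n₀, fun n hn => ?_⟩
    obtain ⟨z, hz, _, _⟩ := key n hn
    rw [hz]
    simp
  · -- the limit
    set A : ℕ → ℝ := fun n =>
      if h : n₀ < n then ‖((key n h).choose)‖ else 1 / |a| with hA
    have hdist : ∀ n : ℕ, dist (A n) (1 / |a|) ≤ r ^ n / |a| := by
      intro n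
      by_cases h : n₀ < n
      · obtain ⟨hfil, hz, hzb⟩ := (key n h).choose_spec
        set z := (key n h).choose with hzdef
        have hzne : A n = ‖z‖ := by rw [hA]; simp [h]; rfl
        have h1 : ‖(z - ((-1/a : ℝ) : ℂ))‖ = (‖z‖) ^ n / |a| := by
          have he : z - ((-1/a : ℝ) : ℂ) = z ^ n / (a : ℂ) := by
            have hane' : (a:ℂ) ≠ 0 := by exact_mod_cast hane
            rw [hz]
            push_cast
            rw [eq_div_iff hane']
            ring_nf
            rw [mul_inv_cancel₀ hane']
            ring
          rw [he, norm_div, norm_pow, Complex.norm_real, Real.norm_eq_abs]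
        have h2 := abs_norm_sub_norm_le z ((-1/a : ℝ) : ℂ)
        rw [Complex.norm_real, Real.norm_eq_abs, h1] at h2
        have h3 : |(-1/a : ℝ)| = 1 / |a| := by
          rw [abs_div, abs_neg, abs_one]
        rw [h3] at h2
        have h4 : (‖z‖) ^ n / |a| ≤ r ^ n / |a| := by
          gcongr
        rw [Real.dist_eq, hzne]
        exact le_trans h2 h4
      · rw [hA]
        simp [h, Real.dist_eq]
        positivity
    have hbound : Tendsto (fun n : ℕ => r ^ n / |a|) atTop (nhds 0) := by
      have := (tendsto_pow_atTop_nhds_zero_of_lt_one hr0 hr1).div_const |a|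
      simpa using this
    have hAlim : Tendsto A atTop (nhds (1 / |a|)) := by
      refine tendsto_iff_dist_tendsto_zero.mpr ?_
      exact squeeze_zero (fun n => dist_nonneg) hdist hbound
    have hMA : (fun n => (A n)⁻¹) =ᶠ[atTop] M := by
      rw [Filter.EventuallyEq, eventually_atTop]
      refine ⟨n₀ + 1, fun n hn => ?_⟩
      have h : n₀ < n := by omega
      obtain ⟨hfil, hz, hzb⟩ := (key n h).choose_spec
      set z := (key n h).choose with hzdef
      have hzne : A n = ‖z‖ := by rw [hA]; simp [h]; rfl
      have hzlt : ‖z‖ < 1 := lt_of_le_of_lt hzb hr1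
      have hMz : M n * ‖z‖ = 1 := by
        rw [hM n]
        exact M_eq_inv_abs (by omega) hfil hzlt
      have hz0 : z ≠ 0 := by
        intro h0
        rw [h0] at hz
        simp [zero_pow (by omega : n ≠ 0)] at hz
      have hzpos : (0:ℝ) < ‖z‖ := norm_pos_iff.mpr hz0
      rw [hzne]
      field_simp
      linarith [hMz]
    have hfinal : Tendsto (fun n => (A n)⁻¹) atTop (nhds (1 / |a|)⁻¹) :=
      hAlim.inv₀ (by positivity)
    rw [one_div, inv_inv] at hfinal
    exact Tendsto.congr' hMA hfinal
end
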